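/- Let f₁,…,f_m ∈ ℤ[X] (m ≥ 1) be polynomials whose greatest common divisor in ℤ[X] is 1. Then there exists a finite set P ⊆ ℕ such that for every b ∈ ℤ the greatest common divisor gcd(f₁(b),…,f_m(b)) lies in P. Equivalently, the set {gcd(f₁(b),…,f_m(b)) : b ∈ ℤ} is finite. -/

import Mathlib

open Polynomial

lemma aux_bezout (m : ℕ) (f : Fin m → Polynomial ℤ)
    (hgcd : ∀ d : Polynomial ℤ, (∀ i, d ∣ f i) → IsUnit d) :
    ∃ N : ℤ, N ≠ 0 ∧ ∃ e : Fin m → Polynomial ℤ,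
      ∑ i, e i * f i = C N := by
  classical
  set φ := algebraMap ℤ ℚ with hφ
  have hinj : Function.Injective φ := IsFractionRing.injective ℤ ℚ
  have hminj : Function.Injective (Polynomial.map φ) := Polynomial.map_injective φ hinj
  set g : Fin m → Polynomial ℚ := fun i => (f i).map φ with hg
  -- the ideal generated by the g i is ⊤
  have htop : Ideal.span (Set.range g) = ⊤ := by
    obtain ⟨p, hp⟩ := (IsPrincipalIdealRing.principal (Ideal.span (Set.range g)) :
      (Ideal.span (Set.range g)).IsPrincipal)
    have hp' : Ideal.span (Set.range g) = Ideal.span {p} := hp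
    have hpdvd : ∀ i, p ∣ g i := by
      intro i
      rw [← Ideal.mem_span_singleton, ← hp']
      exact Ideal.subset_span ⟨i, rfl⟩
    rcases eq_or_ne p 0 with h0 | h0
    · -- all f i = 0, contradiction with hgcd X
      exfalso
      have hz : ∀ i, f i = 0 := by
        intro i
        have := hpdvd i
        rw [h0, zero_dvd_iff] at this
        apply hminj
        simpa using this
      have := hgcd X (fun i => by rw [hz i]; exact dvd_zero _)
      exact Polynomial.not_isUnit_X this
    by_cases hu : IsUnit p
    · rw [hp', Ideal.span_singleton_eq_top.mpr hu]
    -- p is a nonzero nonunit: Gauss contradiction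
    exfalso
    obtain ⟨b, hb⟩ := IsLocalization.integerNormalization_map_to_map (nonZeroDivisors ℤ) p
    set d0 := IsLocalization.integerNormalization (nonZeroDivisors ℤ) p with hd0
    have hbne : (b : ℤ) ≠ 0 := nonZeroDivisors.coe_ne_zero b
    have hbQne : ((b : ℤ) : ℚ) ≠ 0 := by exact_mod_cast hbne
    have hCunit : IsUnit (Polynomial.C ((b : ℤ) : ℚ)) := Polynomial.isUnit_C.mpr hbQne.isUnit
    have hbsmul : ((b : ℤ)) • p = Polynomial.C ((b : ℤ) : ℚ) * p := by
      rw [map_intCast (Polynomial.C : ℚ →+* ℚ[X]) (b : ℤ), zsmul_eq_mul]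
    rw [hbsmul] at hb
    have hd0ne : d0 ≠ 0 := by
      intro h
      rw [h, Polynomial.map_zero] at hb
      rcases mul_eq_zero.mp hb.symm with h' | h'
      · exact hbQne (Polynomial.C_eq_zero.mp h')
      · exact h0 h'
    set q := d0.primPart with hq
    have hqprim : q.IsPrimitive := Polynomial.isPrimitive_primPart d0
    have hqdvd : ∀ i, q ∣ f i := by
      intro i
      rcases eq_or_ne (f i) 0 with hfi | hfi
      · rw [hfi]; exact dvd_zero _
      have hmapdvd : q.map φ ∣ ((f i).primPart).map φ := by
        have h1 : q.map φ ∣ d0.map φ := Polynomial.map_dvd φ (Polynomial.primPart_dvd d0)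
        rw [hb] at h1
        have h2 : q.map φ ∣ p := (hCunit.dvd_mul_left).mp h1
        have hcne : (((f i).content : ℤ) : ℚ) ≠ 0 := by
          simpa [Polynomial.content_eq_zero_iff] using hfi
        have h4 : (f i).map φ = Polynomial.C (((f i).content : ℤ) : ℚ) * ((f i).primPart).map φ := by
          conv_lhs => rw [(f i).eq_C_content_mul_primPart]
          rw [Polynomial.map_mul, Polynomial.map_C]
          rfl
        have h3 : p ∣ Polynomial.C (((f i).content : ℤ) : ℚ) * ((f i).primPart).map φ := by
          rw [← h4]; exact hpdvd i
        exact h2.trans (((Polynomial.isUnit_C.mpr hcne.isUnit).dvd_mul_left).mp h3)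
      have := hqprim.dvd_of_fraction_map_dvd_fraction_map
        hmapdvd
      exact this.trans (Polynomial.primPart_dvd (f i))
    have hqunit := hgcd q hqdvd
    have hqdeg : q.natDegree = 0 := Polynomial.natDegree_eq_zero_of_isUnit hqunit
    have hd0deg : d0.natDegree = 0 := by rw [← Polynomial.natDegree_primPart d0]; exact hqdeg
    have hpdeg : p.natDegree = 0 := by
      have hnd : (d0.map φ).natDegree = 0 := by
        rw [Polynomial.natDegree_map_eq_of_injective hinj, hd0deg]
      rw [hb] at hnd
      rwa [Polynomial.natDegree_C_mul hbQne] at hnd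
    exact hu (Polynomial.isUnit_iff_degree_eq_zero.mpr
      (by rw [Polynomial.degree_eq_natDegree h0, hpdeg]; rfl))
  -- extract a Bezout combination
  have h1 : (1 : ℚ[X]) ∈ Ideal.span (Set.range g) := htop ▸ Submodule.mem_top
  obtain ⟨c, hc⟩ := (Submodule.mem_span_range_iff_exists_fun ℚ[X]).mp h1
  choose u hu using fun i =>
    IsLocalization.integerNormalization_map_to_map (nonZeroDivisors ℤ) (c i)
  set D : Fin m → Polynomial ℤ :=
    fun i => IsLocalization.integerNormalization (nonZeroDivisors ℤ) (c i) with hD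
  set N : ℤ := ∏ i, ((u i : ℤ)) with hN
  refine ⟨N, Finset.prod_ne_zero_iff.mpr fun i _ => nonZeroDivisors.coe_ne_zero _,
    fun i => C (∏ j ∈ Finset.univ.erase i, ((u j : ℤ))) * D i, ?_⟩
  apply hminj
  have hsmul : ∀ i, ((u i : ℤ)) • c i = Polynomial.C ((u i : ℤ) : ℚ) * c i := by
    intro i
    rw [map_intCast (Polynomial.C : ℚ →+* ℚ[X]) (u i : ℤ), zsmul_eq_mul]
  have hterm : ∀ i ∈ Finset.univ,
      ((C (∏ j ∈ Finset.univ.erase i, ((u j : ℤ))) * D i) * f i).map φ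
        = C ((N : ℤ) : ℚ) * (c i * g i) := by
    intro i _
    rw [Polynomial.map_mul, Polynomial.map_mul, Polynomial.map_C, hu i, hsmul i]
    rw [← mul_assoc, ← Polynomial.C_mul]
    have : (φ (∏ j ∈ Finset.univ.erase i, ((u j : ℤ)))) * ((u i : ℤ) : ℚ) = ((N : ℤ) : ℚ) := by
      rw [hN, ← Finset.prod_erase_mul Finset.univ _ (Finset.mem_univ i)]
      simp only [hφ, eq_intCast]
      push_cast
      ring
    rw [this, mul_assoc]
  rw [Polynomial.map_sum, Finset.sum_congr rfl hterm, ← Finset.mul_sum]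
  have hc' : ∑ i, c i * g i = 1 := by
    rw [← hc]
    exact Finset.sum_congr rfl fun i _ => (smul_eq_mul _ _).symm
  rw [hc', mul_one, Polynomial.map_C]
  rfl

/-- if `f₁,…,f_m ∈ ℤ[X]` have gcd `1`, then the set of values
`gcd(f₁(b),…,f_m(b))` for `b ∈ ℤ` is finite. -/
theorem stmt_6 (m : ℕ) (hm : 1 ≤ m) (f : Fin m → Polynomial ℤ)
    (hgcd : ∀ d : Polynomial ℤ, (∀ i, d ∣ f i) → IsUnit d) :
    Set.Finite (Set.range fun b : ℤ =>
      Finset.univ.gcd fun i : Fin m => ((f i).eval b).natAbs) := by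
  obtain ⟨N, hN0, e, he⟩ := aux_bezout m f hgcd
  apply Set.Finite.subset (N.natAbs.divisors : Finset ℕ).finite_toSet
  rintro x ⟨b, rfl⟩
  set G := Finset.univ.gcd fun i : Fin m => ((f i).eval b).natAbs with hG
  have hdvd : (G : ℤ) ∣ N := by
    have hNval : N = ∑ i, (e i).eval b * (f i).eval b := by
      have h := congrArg (Polynomial.eval b) he
      simpa [Polynomial.eval_finset_sum] using h.symm
    rw [hNval]
    apply Finset.dvd_sum
    intro i _
    refine Dvd.dvd.mul_left ?_ _
    exact (Int.natCast_dvd_natCast.mpr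
      (Finset.gcd_dvd (Finset.mem_univ i))).trans (Int.natAbs_dvd.mpr dvd_rfl)
  exact Finset.mem_coe.mpr (Nat.mem_divisors.mpr
    ⟨Int.natCast_dvd_natCast.mp (Int.dvd_natAbs.mpr hdvd), Int.natAbs_ne_zero.mpr hN0⟩)
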